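/- Let W ⊆ {x₁,...,x_n} be an admissible set of ⊟-points for a system of equations with dependency graph G, meaning: for every cycle in G, the unknown with the highest index on that cycle belongs to W. If all right-hand sides are monotone over a directed set D with widening/narrowing satisfying the standard chain conditions, then structured worklist iteration applying the combined operator ⊟ only at unknowns in W (and plain replacement ρ x := f_x ρ elsewhere) terminates. -/

import Mathlib

open Classical in
noncomputable def combine {D : Type*} [Preorder D] (w nar : D → D → D) (a b : D) : D :=
  if b ≤ a then nar a b else w a b

/- One step of structured worklist iteration applying `box` only at
unknowns in `W` (plain replacement elsewhere); on change, the influenced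
unknowns are scheduled, together with the unknown itself if it lies in `W`. -/
open Classical in
noncomputable def swStepW {D : Type*} (box : D → D → D) (f : ℕ → (ℕ → D) → D)
    (infl : ℕ → Finset ℕ) (W : Set ℕ) :
    (ℕ → D) × Finset ℕ → (ℕ → D) × Finset ℕ :=
  fun s =>
    if h : s.2.Nonempty then
      let i := s.2.min' h
      let newv := if i ∈ W then box (s.1 i) (f i s.1) else f i s.1
      if newv = s.1 i then (s.1, s.2.erase i)
      else (Function.update s.1 i newv,
        s.2.erase i ∪ infl i ∪ (if i ∈ W then {i} else ∅))
    else s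

open Classical

noncomputable def nv {D : Type*} (box : D → D → D) (f : ℕ → (ℕ → D) → D) (W : Set ℕ)
    (ρ : ℕ → D) (i : ℕ) : D :=
  if i ∈ W then box (ρ i) (f i ρ) else f i ρ

section SW

variable {D : Type*}

lemma swStepW_eq (box : D → D → D) (f : ℕ → (ℕ → D) → D) (infl : ℕ → Finset ℕ)
    (W : Set ℕ) (s : (ℕ → D) × Finset ℕ) (h : s.2.Nonempty) :
    swStepW box f infl W s =
      if nv box f W s.1 (s.2.min' h) = s.1 (s.2.min' h)
      then (s.1, s.2.erase (s.2.min' h))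
      else (Function.update s.1 (s.2.min' h) (nv box f W s.1 (s.2.min' h)),
        s.2.erase (s.2.min' h) ∪ infl (s.2.min' h) ∪
          (if s.2.min' h ∈ W then {s.2.min' h} else ∅)) := by
  simp only [swStepW, nv]
  rw [dif_pos h]; rfl

lemma swStepW_empty (box : D → D → D) (f : ℕ → (ℕ → D) → D) (infl : ℕ → Finset ℕ)
    (W : Set ℕ) (s : (ℕ → D) × Finset ℕ) (h : s.2 = ∅) :
    swStepW box f infl W s = s := by
  simp only [swStepW]
  rw [dif_neg]
  simp [h]

variable [PartialOrder D]

lemma le_of_combine_eq (w nar : D → D → D) (hw2 : ∀ a b, b ≤ w a b) {a b : D}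
    (h : combine w nar a b = a) : b ≤ a := by
  by_cases hba : b ≤ a
  · exact hba
  · exfalso; apply hba
    rw [combine, if_neg hba] at h
    rw [← h]; exact hw2 a b

lemma combine_self (w nar : D → D → D) (hn : ∀ a b : D, b ≤ a → b ≤ nar a b ∧ nar a b ≤ a)
    (a : D) : combine w nar a a = a := by
  rw [combine, if_pos le_rfl]
  exact le_antisymm (hn a a le_rfl).2 (hn a a le_rfl).1

lemma combine_of_le (w nar : D → D → D) {a b : D} (h : b ≤ a) :
    combine w nar a b = nar a b := by rw [combine, if_pos h]

lemma combine_of_not_le (w nar : D → D → D) {a b : D} (h : ¬ b ≤ a) :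
    combine w nar a b = w a b := by rw [combine, if_neg h]

end SW

section Steps

open Classical

variable {D : Type*}

lemma step_val_ne (box : D → D → D) (f : ℕ → (ℕ → D) → D) (infl : ℕ → Finset ℕ)
    (W : Set ℕ) (s : (ℕ → D) × Finset ℕ) (j : ℕ)
    (h : ∀ hne : s.2.Nonempty, s.2.min' hne ≠ j) :
    (swStepW box f infl W s).1 j = s.1 j := by
  by_cases hne : s.2.Nonempty
  · rw [swStepW_eq box f infl W s hne]
    split
    · rfl
    · exact Function.update_of_ne (fun hj => h hne hj.symm) _ _
  · rw [swStepW_empty box f infl W s (Finset.not_nonempty_iff_eq_empty.mp hne)]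

lemma step_Q_subset (box : D → D → D) (f : ℕ → (ℕ → D) → D) (infl : ℕ → Finset ℕ)
    (W : Set ℕ) (N : ℕ) (s : (ℕ → D) × Finset ℕ)
    (h : s.2 ⊆ Finset.range N) (hinfl : ∀ i, infl i ⊆ Finset.range N) :
    (swStepW box f infl W s).2 ⊆ Finset.range N := by
  by_cases hne : s.2.Nonempty
  · rw [swStepW_eq box f infl W s hne]
    split
    · exact (Finset.erase_subset _ _).trans h
    · intro x hx
      simp only [Finset.mem_union] at hx
      rcases hx with (hx | hx) | hx
      · exact h (Finset.mem_of_mem_erase hx)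
      · exact hinfl _ hx
      · split at hx
        · exact (Finset.mem_singleton.mp hx) ▸ h (s.2.min'_mem hne)
        · exact absurd hx (Finset.notMem_empty x)
  · rw [swStepW_empty box f infl W s (Finset.not_nonempty_iff_eq_empty.mp hne)]
    exact h

/-- stability outside the worklist is preserved -/
lemma step_inv (box : D → D → D) (f : ℕ → (ℕ → D) → D) (dep : ℕ → Finset ℕ)
    (W : Set ℕ) (N : ℕ)
    (hdep : ∀ i (ρ ρ' : ℕ → D), (∀ j ∈ dep i, ρ j = ρ' j) → f i ρ = f i ρ')
    (s : (ℕ → D) × Finset ℕ)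
    (hs : ∀ j, j < N → j ∉ s.2 → nv box f W s.1 j = s.1 j) :
    ∀ j, j < N → j ∉ (swStepW box f (fun i => (Finset.range N).filter (fun j => i ∈ dep j)) W s).2 →
      nv box f W (swStepW box f (fun i => (Finset.range N).filter (fun j => i ∈ dep j)) W s).1 j
        = (swStepW box f (fun i => (Finset.range N).filter (fun j => i ∈ dep j)) W s).1 j := by
  by_cases hne : s.2.Nonempty
  · rw [swStepW_eq box f _ W s hne]
    generalize hgen : s.2.min' hne = i
    intro j hj
    split
    · rename_i hchg
      intro hjQ
      simp only
      by_cases hji : j = i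
      · subst hji; exact hchg
      · exact hs j hj (fun hjs => hjQ (Finset.mem_erase.mpr ⟨hji, hjs⟩))
    · rename_i hchg
      intro hjQ
      simp only [Finset.mem_union, not_or] at hjQ
      obtain ⟨⟨hjQ1, hjQ2⟩, hjQ3⟩ := hjQ
      have hjdep : i ∉ dep j := by
        intro hmem
        exact hjQ2 (Finset.mem_filter.mpr ⟨Finset.mem_range.mpr hj, hmem⟩)
      have hfj : ∀ v, f j (Function.update s.1 i v) = f j s.1 := fun v =>
        hdep _ _ _ (fun k hk => Function.update_of_ne (fun (h : k = i) => hjdep (h ▸ hk)) _ _)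
      simp only
      by_cases hji : j = i
      · subst hji
        have hjW : j ∉ W := by
          intro hW
          rw [if_pos hW] at hjQ3
          exact hjQ3 (Finset.mem_singleton_self j)
        rw [Function.update_self]
        simp only [nv, if_neg hjW]
        exact hfj _
      · have hupd : ∀ v, Function.update s.1 i v j = s.1 j := fun v =>
          Function.update_of_ne hji _ _
        have hstable := hs j hj (fun hjs => hjQ1 (Finset.mem_erase.mpr ⟨hji, hjs⟩))
        simp only [nv] at hstable ⊢
        rw [hupd, hfj]
        exact hstable
  · rw [swStepW_empty box f _ W s (Finset.not_nonempty_iff_eq_empty.mp hne)]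
    exact hs

variable [PartialOrder D]

/-- once `f j ρ ≤ ρ j` everywhere (below N), every step decreases the state pointwise
and preserves this property. -/
lemma step_decr (w nar : D → D → D)
    (hn : ∀ a b : D, b ≤ a → b ≤ nar a b ∧ nar a b ≤ a)
    (f : ℕ → (ℕ → D) → D) (hmono : ∀ i, Monotone (f i))
    (infl : ℕ → Finset ℕ) (W : Set ℕ) (N : ℕ)
    (s : (ℕ → D) × Finset ℕ) (hQ : s.2 ⊆ Finset.range N)
    (hpost : ∀ j, j < N → f j s.1 ≤ s.1 j) :
    (∀ j, (swStepW (combine w nar) f infl W s).1 j ≤ s.1 j) ∧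
      (∀ j, j < N → f j (swStepW (combine w nar) f infl W s).1 ≤
        (swStepW (combine w nar) f infl W s).1 j) := by
  by_cases hne : s.2.Nonempty
  · have hiN : s.2.min' hne < N := Finset.mem_range.mp (hQ (s.2.min'_mem hne))
    have hb : f (s.2.min' hne) s.1 ≤ s.1 (s.2.min' hne) := hpost _ hiN
    have hnew1 : f (s.2.min' hne) s.1 ≤ nv (combine w nar) f W s.1 (s.2.min' hne) := by
      unfold nv
      split
      · rw [combine_of_le w nar hb]; exact (hn _ _ hb).1
      · exact le_rfl
    have hnew2 : nv (combine w nar) f W s.1 (s.2.min' hne) ≤ s.1 (s.2.min' hne) := by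
      unfold nv
      split
      · rw [combine_of_le w nar hb]; exact (hn _ _ hb).2
      · exact hb
    rw [swStepW_eq (combine w nar) f infl W s hne]
    split
    · exact ⟨fun j => le_rfl, hpost⟩
    · simp only
      have hle : ∀ j, Function.update s.1 (s.2.min' hne)
          (nv (combine w nar) f W s.1 (s.2.min' hne)) j ≤ s.1 j := by
        intro j
        by_cases hji : j = s.2.min' hne
        · subst hji; rw [Function.update_self]; exact hnew2
        · rw [Function.update_of_ne hji]
      refine ⟨hle, fun j hj => ?_⟩
      have h1 : f j (Function.update s.1 (s.2.min' hne)
          (nv (combine w nar) f W s.1 (s.2.min' hne))) ≤ f j s.1 := hmono j hle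
      by_cases hji : j = s.2.min' hne
      · subst hji
        rw [Function.update_self]
        exact h1.trans hnew1
      · rw [Function.update_of_ne hji]
        exact h1.trans (hpost j hj)
  · rw [swStepW_empty (combine w nar) f infl W s (Finset.not_nonempty_iff_eq_empty.mp hne)]
    exact ⟨fun j => le_rfl, hpost⟩

end Steps

section Cycle

/-- From an edge `x → j` and a path `j →* x` (all within `range M`), admissibility
produces a vertex `v ∈ W` on the cycle with `x ≤ v < M`. -/
lemma cycle_admissible (dep : ℕ → Finset ℕ) (W : Set ℕ) (M : ℕ)
    (hadm : ∀ (c : ℕ → ℕ) (p : ℕ), 0 < p → (∀ k, c (k + p) = c k) →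
      (∀ k, c k ∈ dep (c (k+1))) → (∀ k, c k < M) →
      ∃ k, c k ∈ W ∧ ∀ j, c j ≤ c k)
    (x j : ℕ)
    (hEdge : x ∈ dep j ∧ x < M ∧ j < M)
    (hR : Relation.ReflTransGen (fun a b => a ∈ dep b ∧ a < M ∧ b < M) j x) :
    ∃ v, v ∈ W ∧ x ≤ v ∧ v < M := by
  set E : ℕ → ℕ → Prop := fun a b => a ∈ dep b ∧ a < M ∧ b < M with hE
  obtain ⟨l, hchain, hlast⟩ := List.exists_isChain_cons_of_relationReflTransGen hR
  set M0 : List ℕ := x :: j :: l with hM0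
  set p : ℕ := (j :: l).length with hplen
  have hp : 0 < p := by simp [hplen]
  have hlen : M0.length = p + 1 := by simp [hM0, hplen]
  have hchainM : List.IsChain E M0 := List.IsChain.cons_cons hEdge hchain
  have hget_eq : ∀ (a b : ℕ) (h1 : a < M0.length) (h2 : b < M0.length),
      a = b → M0.get ⟨a, h1⟩ = M0.get ⟨b, h2⟩ := by
    intro a b h1 h2 h; subst h; rfl
  have hconsec : ∀ (i : ℕ) (h : i < p), E (M0.get ⟨i, by omega⟩) (M0.get ⟨i+1, by omega⟩) := by
    have hcg := List.isChain_iff_getElem.mp hchainM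
    intro i hi
    have h2 := hcg i (by omega)
    simpa only [List.get_eq_getElem] using h2
  have hgetlast : M0.get ⟨p, by omega⟩ = x := by
    have h1 : M0.getLast (by simp [hM0]) = x := by
      show (x :: j :: l).getLast (List.cons_ne_nil _ _) = x
      rw [List.getLast_cons (by simp : (j :: l) ≠ [])]
      exact hlast
    rw [List.getLast_eq_getElem] at h1
    rw [← h1]
    apply hget_eq
    omega
  set c : ℕ → ℕ := fun k => M0.get ⟨k % p, by have := Nat.mod_lt k hp; omega⟩ with hc
  have hper : ∀ k, c (k + p) = c k := by
    intro k
    apply hget_eq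
    exact Nat.add_mod_right k p
  have hEdges : ∀ k, E (c k) (c (k+1)) := by
    intro k
    have hr : k % p < p := Nat.mod_lt k hp
    have hstep := hconsec (k % p) hr
    have hmod : (k+1) % p = (k % p + 1) % p := by
      conv_lhs => rw [Nat.add_mod]
      conv_rhs => rw [Nat.add_mod]
      rw [Nat.mod_mod_of_dvd _ dvd_rfl]
    by_cases hcase : k % p + 1 < p
    · have : c (k+1) = M0.get ⟨k % p + 1, by omega⟩ := by
        apply hget_eq
        rw [hmod ]
        exact Nat.mod_eq_of_lt hcase
      rw [this]
      exact hstep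
    · have hcase' : k % p + 1 = p := by omega
      have h1 : c (k+1) = M0.get ⟨0, by omega⟩ := by
        apply hget_eq
        rw [hmod, hcase']
        exact Nat.mod_self p
      have h2 : M0.get ⟨0, by omega⟩ = x := rfl
      have h3 : M0.get ⟨k % p + 1, by omega⟩ = x := by
        rw [← hgetlast]
        apply hget_eq
        exact hcase'
      rw [h1, h2, ← h3]
      exact hstep
  have hbound : ∀ k, c k < M := fun k => (hEdges k).2.1
  obtain ⟨k, hkW, hkmax⟩ := hadm c p hp hper (fun k => (hEdges k).1) hbound
  have hc0 : c 0 = x := by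
    have : c 0 = M0.get ⟨0, by omega⟩ := by
      apply hget_eq
      exact Nat.zero_mod p
    rw [this]; rfl
  exact ⟨c k, hkW, hc0 ▸ hkmax 0, hbound k⟩

end Cycle

section Main

open Classical Finset

theorem sw_main {D : Type*} [PartialOrder D]
    (w nar : D → D → D)
    (hw2 : ∀ a b, b ≤ w a b)
    (hn : ∀ a b : D, b ≤ a → b ≤ nar a b ∧ nar a b ≤ a)
    (hwterm : ∀ d b : ℕ → D, (∀ i, d (i+1) = w (d i) (b i)) →
      ∃ N, ∀ m, N ≤ m → d m = d N)
    (hnterm : ∀ d b : ℕ → D, (∀ i, b i ≤ d i ∧ d (i+1) = nar (d i) (b i)) →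
      ∃ N, ∀ m, N ≤ m → d m = d N) :
    ∀ (N : ℕ) (f : ℕ → (ℕ → D) → D) (dep : ℕ → Finset ℕ) (W : Set ℕ),
      (∀ i, Monotone (f i)) →
      (∀ i (ρ ρ' : ℕ → D), (∀ j ∈ dep i, ρ j = ρ' j) → f i ρ = f i ρ') →
      (∀ (c : ℕ → ℕ) (p : ℕ), 0 < p → (∀ k, c (k + p) = c k) →
        (∀ k, c k ∈ dep (c (k+1))) → (∀ k, c k < N) →
        ∃ k, c k ∈ W ∧ ∀ j, c j ≤ c k) →
      ∀ (ρ0 : ℕ → D) (Q : Finset ℕ), Q ⊆ Finset.range N →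
        (∀ j, j < N → j ∉ Q → nv (combine w nar) f W ρ0 j = ρ0 j) →
        ∃ k, ((swStepW (combine w nar) f
            (fun i => (Finset.range N).filter (fun j => i ∈ dep j)) W)^[k] (ρ0, Q)).2 = ∅ := by
  intro N
  induction N using Nat.strong_induction_on with
  | _ N IH =>
  rcases N with _ | N
  · intro f dep W _ _ _ ρ0 Q hQ _
    refine ⟨0, ?_⟩
    rw [Function.iterate_zero_apply]
    exact Finset.subset_empty.mp (by rwa [Finset.range_zero] at hQ)
  · intro f dep W hmono hdep hadm ρ0 Q hQ hinv0
    by_contra hinf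
    push_neg at hinf
    set step := swStepW (combine w nar) f
        (fun i => (Finset.range (N+1)).filter (fun j => i ∈ dep j)) W with hstep
    set S : ℕ → (ℕ → D) × Finset ℕ := fun t => step^[t] (ρ0, Q) with hSdef
    have hinf' : ∀ t, (S t).2 ≠ ∅ := fun t => Finset.nonempty_iff_ne_empty.mp (hinf t)
    have hne : ∀ t, (S t).2.Nonempty := fun t => Finset.nonempty_iff_ne_empty.mpr (hinf' t)
    have hSsucc : ∀ t, S (t+1) = step (S t) := fun t => Function.iterate_succ_apply' step t _
    set I : ℕ → ℕ := fun t => (S t).2.min' (hne t) with hI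
    have hImem : ∀ t, I t ∈ (S t).2 := fun t => (S t).2.min'_mem (hne t)
    have hQsub : ∀ t, (S t).2 ⊆ Finset.range (N+1) := by
      intro t
      induction t with
      | zero => exact hQ
      | succ t ih =>
        rw [hSsucc t]
        exact step_Q_subset _ f _ W (N+1) (S t) ih (fun i => Finset.filter_subset _ _)
    have hIlt : ∀ t, I t < N+1 := fun t => Finset.mem_range.mp (hQsub t (hImem t))
    have hval : ∀ t j, I t ≠ j → (S (t+1)).1 j = (S t).1 j := by
      intro t j h
      rw [hSsucc t]
      exact step_val_ne _ f _ W (S t) j (fun _ => h)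
    have hinv : ∀ t, ∀ j, j < N+1 → j ∉ (S t).2 →
        nv (combine w nar) f W (S t).1 j = (S t).1 j := by
      intro t
      induction t with
      | zero => exact hinv0
      | succ t ih =>
        rw [hSsucc t]
        exact step_inv _ f dep W (N+1) hdep (S t) ih
    -- at a top-processing time the worklist is exactly {N}
    have htopQ : ∀ t, I t = N → (S t).2 = {N} := by
      intro t ht
      apply Finset.eq_singleton_iff_unique_mem.mpr
      refine ⟨ht ▸ hImem t, fun x hx => ?_⟩
      have h1 : x < N + 1 := Finset.mem_range.mp (hQsub t hx)
      have h2 : N ≤ x := ht ▸ (S t).2.min'_le x hx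
      omega
    -- every top-processing is a change
    have htopchg : ∀ t, I t = N →
        nv (combine w nar) f W (S t).1 N ≠ (S t).1 N := by
      intro t ht hstab
      apply hinf' (t+1)
      rw [hSsucc t, hstep, swStepW_eq _ _ _ _ _ (hne t)]
      have hmin : (S t).2.min' (hne t) = N := ht
      rw [hmin, if_pos hstab]
      simp only
      rw [htopQ t ht]
      exact Finset.erase_singleton N
    have hupdtop : ∀ t, I t = N →
        (S (t+1)).1 N = nv (combine w nar) f W (S t).1 N := by
      intro t ht
      rw [hSsucc t, hstep, swStepW_eq _ _ _ _ _ (hne t)]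
      have hmin : (S t).2.min' (hne t) = N := ht
      rw [hmin, if_neg (htopchg t ht)]
      exact Function.update_self _ _ _
    -- there are infinitely many top-processing times
    have htopinf : ∀ T, ∃ t, T ≤ t ∧ I t = N := by
      intro T0
      by_contra hfin
      push_neg at hfin
      obtain ⟨T, hT⟩ : ∃ T, ∀ t, T ≤ t → I t ≠ N := ⟨T0, fun t ht h => (hfin t ht) h⟩
      set v : D := (S T).1 N with hv
      set f' : ℕ → (ℕ → D) → D := fun j ρ => f j (Function.update ρ N v) with hf'
      set dep' : ℕ → Finset ℕ := fun j => (dep j).erase N with hdep'def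
      set step' := swStepW (combine w nar) f'
          (fun i => (Finset.range N).filter (fun j => i ∈ dep' j)) W with hstep'
      have hmono' : ∀ i, Monotone (f' i) := by
        intro i ρ ρ' h
        apply hmono i
        intro j
        by_cases hj : j = N
        · subst hj; rw [Function.update_self, Function.update_self]
        · rw [Function.update_of_ne hj, Function.update_of_ne hj]; exact h j
      have hdep'' : ∀ i (ρ ρ' : ℕ → D), (∀ j ∈ dep' i, ρ j = ρ' j) → f' i ρ = f' i ρ' := by
        intro i ρ ρ' h
        apply hdep
        intro j hj
        by_cases hjN : j = N
        · subst hjN; rw [Function.update_self, Function.update_self]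
        · rw [Function.update_of_ne hjN, Function.update_of_ne hjN]
          exact h j (Finset.mem_erase.mpr ⟨hjN, hj⟩)
      have hadm' : ∀ (c : ℕ → ℕ) (p : ℕ), 0 < p → (∀ k, c (k + p) = c k) →
          (∀ k, c k ∈ dep' (c (k+1))) → (∀ k, c k < N) →
          ∃ k, c k ∈ W ∧ ∀ j, c j ≤ c k := by
        intro c p hp hper hedge hlt
        exact hadm c p hp hper (fun k => Finset.mem_of_mem_erase (hedge k))
          (fun k => (hlt k).trans (Nat.lt_succ_self N))
      have hvN : ∀ k, (S (T+k)).1 N = v := by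
        intro k
        induction k with
        | zero => rfl
        | succ k ih =>
          rw [show T + (k+1) = (T+k) + 1 from rfl]
          rw [hval (T+k) N (hT (T+k) (Nat.le_add_right T k)), ih]
      have hfv : ∀ k j, f' j (S (T+k)).1 = f j (S (T+k)).1 := by
        intro k j
        show f j (Function.update (S (T+k)).1 N v) = f j (S (T+k)).1
        congr 1
        funext x
        by_cases hx : x = N
        · subst hx; rw [Function.update_self, hvN k]
        · rw [Function.update_of_ne hx]
      have hsim : ∀ k, step'^[k] ((S T).1, (S T).2.erase N)
          = ((S (T+k)).1, (S (T+k)).2.erase N) := by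
        intro k
        induction k with
        | zero => rfl
        | succ k ih =>
          rw [Function.iterate_succ_apply', ih]
          have htN : I (T+k) ≠ N := hT (T+k) (Nat.le_add_right T k)
          have hiQe : I (T+k) ∈ (S (T+k)).2.erase N :=
            Finset.mem_erase.mpr ⟨htN, hImem (T+k)⟩
          have hnee : ((S (T+k)).2.erase N).Nonempty := ⟨I (T+k), hiQe⟩
          have hmin : ((S (T+k)).2.erase N).min' hnee = I (T+k) := by
            apply le_antisymm (Finset.min'_le _ _ hiQe)
            apply Finset.le_min'
            intro x hx
            exact (S (T+k)).2.min'_le x (Finset.mem_of_mem_erase hx)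
          have hnv' : nv (combine w nar) f' W (S (T+k)).1 (I (T+k))
              = nv (combine w nar) f W (S (T+k)).1 (I (T+k)) := by
            unfold nv
            rw [hfv k (I (T+k))]
          rw [hstep', swStepW_eq _ _ _ _ ((S (T+k)).1, (S (T+k)).2.erase N) hnee]
          simp only
          rw [hmin, hnv']
          rw [show T + (k+1) = (T+k) + 1 from rfl, hSsucc (T+k), hstep,
            swStepW_eq _ _ _ _ _ (hne (T+k))]
          have hminbig : (S (T+k)).2.min' (hne (T+k)) = I (T+k) := rfl
          rw [hminbig]
          by_cases hchg : nv (combine w nar) f W (S (T+k)).1 (I (T+k))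
              = (S (T+k)).1 (I (T+k))
          · rw [if_pos hchg, if_pos hchg]
            simp only
            have : ((S (T+k)).2.erase N).erase (I (T+k))
                = ((S (T+k)).2.erase (I (T+k))).erase N := by
              ext x
              simp only [Finset.mem_erase]
              tauto
            rw [this]
          · rw [if_neg hchg, if_neg hchg]
            simp only
            refine Prod.ext rfl ?_
            simp only
            ext x
            have hIltk : I (T+k) < N := by
              have := hIlt (T+k); omega
            simp only [Finset.mem_erase, Finset.mem_union, Finset.mem_filter,
              Finset.mem_range, hdep'def]
            constructor
            · rintro ((⟨hx1, hx2, hx3⟩ | ⟨hx1, hx2, hx3⟩) | hx)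
              · exact ⟨hx2, Or.inl (Or.inl ⟨hx1, hx3⟩)⟩
              · exact ⟨by omega, Or.inl (Or.inr ⟨by omega, hx3⟩)⟩
              · have hxI : x = I (T+k) := by
                  split at hx
                  · exact Finset.mem_singleton.mp hx
                  · exact absurd hx (Finset.notMem_empty x)
                exact ⟨by omega, Or.inr hx⟩
            · rintro ⟨hxN, ((⟨hx1, hx2⟩ | ⟨hx1, hx2⟩) | hx)⟩
              · exact Or.inl (Or.inl ⟨hx1, hxN, hx2⟩)
              · exact Or.inl (Or.inr ⟨by omega, htN, hx2⟩)
              · exact Or.inr hx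
      -- apply the induction hypothesis to the reduced system
      have hsub' : (S T).2.erase N ⊆ Finset.range N := by
        intro x hx
        rw [Finset.mem_erase] at hx
        have := Finset.mem_range.mp (hQsub T hx.2)
        rw [Finset.mem_range]
        omega
      have hinv' : ∀ j, j < N → j ∉ (S T).2.erase N →
          nv (combine w nar) f' W (S T).1 j = (S T).1 j := by
        intro j hj hjQ
        have hjQ' : j ∉ (S T).2 := fun h =>
          hjQ (Finset.mem_erase.mpr ⟨by omega, h⟩)
        have := hinv T j (by omega) hjQ'
        have h0 : f' j (S T).1 = f j (S T).1 := hfv 0 j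
        unfold nv at this ⊢
        rw [h0]
        exact this
      obtain ⟨K, hK⟩ := IH N (Nat.lt_succ_self N) f' dep' W hmono' hdep'' hadm'
        (S T).1 ((S T).2.erase N) hsub' hinv'
      have hK' : (step'^[K] ((S T).1, (S T).2.erase N)).2 = ∅ := hK
      rw [hsim K] at hK'
      have : I (T+K) ∈ (S (T+K)).2.erase N :=
        Finset.mem_erase.mpr ⟨hT (T+K) (Nat.le_add_right T K), hImem (T+K)⟩
      have hK'' : (S (T+K)).2.erase N = ∅ := hK'
      rw [hK''] at this
      exact Finset.notMem_empty _ this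
    -- enumerate the top-processing times
    have hPinf : {t | I t = N}.Infinite := by
      apply Set.infinite_of_not_bddAbove
      rintro ⟨bnd, hbnd⟩
      obtain ⟨t, ht1, ht2⟩ := htopinf (bnd+1)
      have := hbnd (show t ∈ {t | I t = N} from ht2)
      omega
    set tk : ℕ → ℕ := Nat.nth (fun t => I t = N) with htkdef
    have htk_mem : ∀ k, I (tk k) = N := fun k => Nat.nth_mem_of_infinite hPinf k
    have htk_mono : StrictMono tk := Nat.nth_strictMono hPinf
    have htk_between : ∀ k t, tk k < t → t < tk (k+1) → I t ≠ N := by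
      intro k t h1 h2 hP
      have he : tk (Nat.count (fun t => I t = N) t) = t := Nat.nth_count hP
      have hklt : k < Nat.count (fun t => I t = N) t := by
        apply htk_mono.lt_iff_lt.mp
        rw [he]; exact h1
      have : tk (k+1) ≤ t := by
        have h3 := htk_mono.monotone (show k+1 ≤ Nat.count (fun t => I t = N) t from hklt)
        rwa [he] at h3
      omega
    set d : ℕ → D := fun k => (S (tk k)).1 N with hddef
    set b : ℕ → D := fun k => f N (S (tk k)).1 with hbdef
    have hconst : ∀ k m, tk k + 1 + m ≤ tk (k+1) →
        (S (tk k + 1 + m)).1 N = (S (tk k + 1)).1 N := by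
      intro k m
      induction m with
      | zero => intro _; rfl
      | succ m ih =>
        intro hle
        have h1 : tk k < tk k + 1 + m := by omega
        have h2 : tk k + 1 + m < tk (k+1) := by omega
        rw [show tk k + 1 + (m+1) = (tk k + 1 + m) + 1 from rfl]
        rw [hval _ N (htk_between k _ h1 h2)]
        exact ih (by omega)
    have hdsucc : ∀ k, d (k+1) = nv (combine w nar) f W (S (tk k)).1 N := by
      intro k
      have hlt : tk k < tk (k+1) := htk_mono (Nat.lt_succ_self k)
      have h1 : (S (tk (k+1))).1 N = (S (tk k + 1)).1 N := by
        have h2 := hconst k (tk (k+1) - (tk k + 1)) (by omega)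
        rwa [show tk k + 1 + (tk (k+1) - (tk k + 1)) = tk (k+1) by omega] at h2
      show (S (tk (k+1))).1 N = _
      rw [h1, hupdtop (tk k) (htk_mem k)]
    have hdne : ∀ k, d (k+1) ≠ d k := by
      intro k h
      rw [hdsucc k] at h
      exact htopchg (tk k) (htk_mem k) h
    by_cases hNW : N ∈ W
    · have hdc : ∀ k, d (k+1) = combine w nar (d k) (b k) := by
        intro k; rw [hdsucc k]; unfold nv; rw [if_pos hNW]
      by_cases hwide : ∀ k, ¬ b k ≤ d k
      · have hws : ∀ k, d (k+1) = w (d k) (b k) := fun k => by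
          rw [hdc k, combine_of_not_le w nar (hwide k)]
        obtain ⟨M, hM⟩ := hwterm d b hws
        exact hdne M (hM (M+1) (Nat.le_succ M))
      · push_neg at hwide
        obtain ⟨k0, hk0⟩ := hwide
        have hpost : ∀ t, tk k0 ≤ t → ∀ j, j < N+1 → f j (S t).1 ≤ (S t).1 j := by
          intro t ht
          induction t, ht using Nat.le_induction with
          | base =>
            intro j hj
            by_cases hjN : j = N
            · subst hjN; exact hk0
            · have hjQ : j ∉ (S (tk k0)).2 := by
                rw [htopQ (tk k0) (htk_mem k0)]
                simp [hjN]
              have hstab := hinv (tk k0) j hj hjQ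
              unfold nv at hstab
              split at hstab
              · exact le_of_combine_eq w nar hw2 hstab
              · exact le_of_eq hstab
          | succ t ht ih =>
            rw [hSsucc t]
            exact (step_decr w nar hn f hmono _ W (N+1) (S t) (hQsub t) ih).2
        have hble : ∀ k, k0 ≤ k → b k ≤ d k := fun k hk =>
          hpost (tk k) (htk_mono.monotone hk) N (Nat.lt_succ_self N)
        have hnarr : ∀ i, b (k0 + i) ≤ d (k0 + i) ∧
            d (k0 + i + 1) = nar (d (k0 + i)) (b (k0 + i)) := by
          intro i
          have h1 := hble (k0 + i) (Nat.le_add_right k0 i)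
          exact ⟨h1, by rw [hdc (k0+i), combine_of_le w nar h1]⟩
        obtain ⟨M, hM⟩ := hnterm (fun i => d (k0 + i)) (fun i => b (k0 + i)) hnarr
        exact hdne (k0 + M) (hM (M+1) (Nat.le_succ M))
    · -- N ∉ W : the ancestors argument
      have hnocycle : ∀ j, j < N+1 → N ∈ dep j →
          ¬ Relation.ReflTransGen (fun a b => a ∈ dep b ∧ a < N+1 ∧ b < N+1) j N := by
        intro j hj hdepj hR
        obtain ⟨v, hvW, hvge, hvlt⟩ := cycle_admissible dep W (N+1) hadm N j
          ⟨hdepj, Nat.lt_succ_self N, hj⟩ hR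
        have hvN : v = N := by omega
        exact hNW (hvN ▸ hvW)
      set A : Finset ℕ := (Finset.range (N+1)).filter
        (fun j => j ≠ N ∧ Relation.ReflTransGen
          (fun a b => a ∈ dep b ∧ a < N+1 ∧ b < N+1) j N) with hAdef
      have hAmem : ∀ j, j ∈ A ↔ (j < N+1 ∧ j ≠ N ∧ Relation.ReflTransGen
          (fun a b => a ∈ dep b ∧ a < N+1 ∧ b < N+1) j N) := by
        intro j
        rw [hAdef]
        simp [Finset.mem_filter, Finset.mem_range, and_assoc]
      have hAsub : A ⊆ Finset.range N := by
        intro x hx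
        rw [hAmem] at hx
        rw [Finset.mem_range]
        omega
      have hclos : ∀ i j, j ∈ A → i ∈ dep j → i < N+1 → i ∈ A := by
        intro i j hjA hij hi
        rw [hAmem] at hjA
        obtain ⟨hj1, hj2, hj3⟩ := hjA
        by_cases hiN : i = N
        · exact absurd hj3 (hnocycle j hj1 (hiN ▸ hij))
        · rw [hAmem]
          exact ⟨hi, hiN, Relation.ReflTransGen.head ⟨hij, hi, hj1⟩ hj3⟩
      have hdepN : ∀ i, i ∈ dep N → i < N+1 → i ∈ A := by
        intro i hiN hi
        by_cases h : i = N
        · exact absurd Relation.ReflTransGen.refl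
            (hnocycle N (Nat.lt_succ_self N) (h ▸ hiN))
        · rw [hAmem]
          exact ⟨hi, h, Relation.ReflTransGen.single ⟨hiN, hi, Nat.lt_succ_self N⟩⟩
      set f' : ℕ → (ℕ → D) → D := fun j => if j ∈ A then f j else fun ρ => ρ j with hf'def
      set dep' : ℕ → Finset ℕ := fun j => if j ∈ A then dep j else {j} with hdep'def
      set W' : Set ℕ := {j | j ∈ W ∨ j ∉ A} with hW'def
      have hf'A : ∀ j, j ∈ A → f' j = f j := by
        intro j hj; show (if j ∈ A then f j else _) = _; rw [if_pos hj]
      have hf'nA : ∀ j, j ∉ A → f' j = fun ρ => ρ j := by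
        intro j hj; show (if j ∈ A then f j else _) = _; rw [if_neg hj]
      have hdep'A : ∀ j, j ∈ A → dep' j = dep j := by
        intro j hj; show (if j ∈ A then dep j else _) = _; rw [if_pos hj]
      have hdep'nA : ∀ j, j ∉ A → dep' j = {j} := by
        intro j hj; show (if j ∈ A then dep j else _) = _; rw [if_neg hj]
      set step' := swStepW (combine w nar) f'
          (fun i => (Finset.range N).filter (fun j => i ∈ dep' j)) W' with hstep'def
      have hmono' : ∀ i, Monotone (f' i) := by
        intro i ρ ρ' h
        by_cases hiA : i ∈ A
        · rw [hf'A i hiA]; exact hmono i h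
        · rw [hf'nA i hiA]; exact h i
      have hdep'' : ∀ i (ρ ρ' : ℕ → D), (∀ j ∈ dep' i, ρ j = ρ' j) → f' i ρ = f' i ρ' := by
        intro i ρ ρ' h
        by_cases hiA : i ∈ A
        · rw [hf'A i hiA]
          apply hdep
          intro j hj
          exact h j (by rw [hdep'A i hiA]; exact hj)
        · rw [hf'nA i hiA]
          exact h i (by rw [hdep'nA i hiA]; exact Finset.mem_singleton_self i)
      have hadm'' : ∀ (c : ℕ → ℕ) (p : ℕ), 0 < p → (∀ k, c (k + p) = c k) →
          (∀ k, c k ∈ dep' (c (k+1))) → (∀ k, c k < N) →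
          ∃ k, c k ∈ W' ∧ ∀ j, c j ≤ c k := by
        intro c p hp hper hedge hlt
        by_cases hall : ∀ k, c k ∈ A
        · have hedge' : ∀ k, c k ∈ dep (c (k+1)) := by
            intro k
            have h1 := hedge k
            rwa [hdep'A _ (hall (k+1))] at h1
          obtain ⟨k, hkW, hkmax⟩ := hadm c p hp hper hedge'
            (fun k => (hlt k).trans (Nat.lt_succ_self N))
          exact ⟨k, Or.inl hkW, hkmax⟩
        · push_neg at hall
          obtain ⟨k0, hk0⟩ := hall
          have hdown : ∀ k, c (k+1) ∉ A → c k = c (k+1) := by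
            intro k h
            have h1 := hedge k
            rw [hdep'nA _ h] at h1
            exact Finset.mem_singleton.mp h1
          have hperit : ∀ (a k : ℕ), c (k + a * p) = c k := by
            intro a
            induction a with
            | zero => intro k; simp
            | succ a iha =>
              intro k
              rw [show k + (a+1) * p = (k + a * p) + p by ring]
              rw [hper (k + a*p), iha k]
          have hconstall : ∀ m, c m = c k0 := by
            intro m
            have hjA : c (k0 + (m+1) * p) = c k0 := hperit (m+1) k0
            have hmj : m ≤ k0 + (m+1) * p := by
              have h1 : (m+1) * 1 ≤ (m+1) * p := Nat.mul_le_mul_left _ hp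
              omega
            have hstepd : ∀ dd, dd ≤ k0 + (m+1)*p - m →
                c (k0 + (m+1)*p - dd) = c k0 := by
              intro dd
              induction dd with
              | zero => intro _; simpa using hjA
              | succ dd ihd =>
                intro hdle
                have ih' := ihd (by omega)
                have heq : k0 + (m+1)*p - dd = (k0 + (m+1)*p - (dd+1)) + 1 := by omega
                have hnotA : c (k0 + (m+1)*p - dd) ∉ A := by rw [ih']; exact hk0
                rw [heq] at hnotA
                have hd := hdown _ hnotA
                rw [hd, ← heq]
                exact ih'
            have h2 := hstepd (k0 + (m+1)*p - m) le_rfl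
            rwa [show k0 + (m+1)*p - (k0 + (m+1)*p - m) = m by omega] at h2
          exact ⟨k0, Or.inr hk0, fun j => (hconstall j).le⟩
      have hsub' : Q ∩ A ⊆ Finset.range N := fun x hx => hAsub (Finset.mem_inter.mp hx).2
      have hinv' : ∀ j, j < N → j ∉ Q ∩ A →
          nv (combine w nar) f' W' ρ0 j = ρ0 j := by
        intro j hj hjQ
        by_cases hjA : j ∈ A
        · have hjQ' : j ∉ Q := fun h => hjQ (Finset.mem_inter.mpr ⟨h, hjA⟩)
          have h0 := hinv0 j (by omega) hjQ'
          unfold nv at h0 ⊢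
          rw [hf'A j hjA]
          by_cases hjW : j ∈ W
          · rw [if_pos (show j ∈ W' from Or.inl hjW)]
            rw [if_pos hjW] at h0
            exact h0
          · rw [if_neg (show j ∉ W' from fun h => h.elim hjW (fun h2 => h2 hjA))]
            rw [if_neg hjW] at h0
            exact h0
        · unfold nv
          rw [if_pos (show j ∈ W' from Or.inr hjA), hf'nA j hjA]
          exact combine_self w nar hn (ρ0 j)
      obtain ⟨K, hK⟩ := IH N (Nat.lt_succ_self N) f' dep' W' hmono' hdep'' hadm''
        ρ0 (Q ∩ A) hsub' hinv'
      have hK2 : (step'^[K] (ρ0, Q ∩ A)).2 = ∅ := hK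
      -- the number of A-processings before time t
      set aA : ℕ → ℕ := fun t => ((Finset.range t).filter (fun u => I u ∈ A)).card with haAdef
      have haA_succ : ∀ t, aA (t+1) = if I t ∈ A then aA t + 1 else aA t := by
        intro t
        show ((Finset.range (t+1)).filter _).card = _
        rw [Finset.range_add_one, Finset.filter_insert]
        split
        · rw [Finset.card_insert_of_notMem
            (fun hmem => Finset.notMem_range_self (Finset.mem_of_mem_filter t hmem))]
        · rfl
      set σ : ℕ → (ℕ → D) × Finset ℕ := fun t => step'^[aA t] (ρ0, Q ∩ A) with hσdef
      have hminbig : ∀ t, (S t).2.min' (hne t) = I t := fun t => rfl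
      have hRel : ∀ t, (σ t).2 = (S t).2 ∩ A ∧
          ∀ j, (j ∈ A ∨ N+1 ≤ j) → (S t).1 j = (σ t).1 j := by
        intro t
        induction t with
        | zero =>
          have haA0 : aA 0 = 0 := by simp [haAdef]
          have hσ0 : σ 0 = (ρ0, Q ∩ A) := by
            show step'^[aA 0] _ = _
            rw [haA0]
            rfl
          rw [hσ0]
          exact ⟨rfl, fun j _ => rfl⟩
        | succ t ih =>
          obtain ⟨ih1, ih2⟩ := ih
          by_cases hiA : I t ∈ A
          · have haA1 : aA (t+1) = aA t + 1 := by rw [haA_succ t, if_pos hiA]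
            have hσsucc : σ (t+1) = step' (σ t) := by
              show step'^[aA (t+1)] _ = _
              rw [haA1, Function.iterate_succ_apply']
            have hiQs : I t ∈ (σ t).2 := by
              rw [ih1]
              exact Finset.mem_inter.mpr ⟨hImem t, hiA⟩
            have hnes : (σ t).2.Nonempty := ⟨_, hiQs⟩
            have hmins : (σ t).2.min' hnes = I t := by
              apply le_antisymm (Finset.min'_le _ _ hiQs)
              apply Finset.le_min'
              intro x hx
              rw [ih1] at hx
              exact (S t).2.min'_le x (Finset.mem_inter.mp hx).1
            have hvals : (S t).1 (I t) = (σ t).1 (I t) := ih2 _ (Or.inl hiA)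
            have hfeq : f (I t) (S t).1 = f (I t) (σ t).1 := by
              apply hdep
              intro j hj
              apply ih2 j
              by_cases hjlt : j < N+1
              · exact Or.inl (hclos j (I t) hiA hj hjlt)
              · exact Or.inr (by omega)
            have hnveq : nv (combine w nar) f' W' (σ t).1 (I t)
                = nv (combine w nar) f W (S t).1 (I t) := by
              unfold nv
              rw [hf'A _ hiA]
              by_cases hW : I t ∈ W
              · rw [if_pos (show I t ∈ W' from Or.inl hW), if_pos hW, ← hfeq, ← hvals]
              · rw [if_neg (show I t ∉ W' from fun h => h.elim hW (fun h2 => h2 hiA)),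
                  if_neg hW, ← hfeq]
            rw [hσsucc, hSsucc t, hstep'def, hstep,
              swStepW_eq _ _ _ _ (σ t) hnes, swStepW_eq _ _ _ _ (S t) (hne t),
              hmins, hminbig t, hnveq, ← hvals]
            by_cases hchg : nv (combine w nar) f W (S t).1 (I t) = (S t).1 (I t)
            · rw [if_pos hchg, if_pos hchg]
              constructor
              · show (σ t).2.erase (I t) = (S t).2.erase (I t) ∩ A
                rw [ih1]
                ext x
                simp only [Finset.mem_erase, Finset.mem_inter]
                tauto
              · exact fun j hj => ih2 j hj
            · rw [if_neg hchg, if_neg hchg]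
              constructor
              · dsimp only
                have hfilter : (Finset.range N).filter (fun j => I t ∈ dep' j)
                    = (Finset.range (N+1)).filter (fun j => I t ∈ dep j) ∩ A := by
                  ext x
                  simp only [Finset.mem_filter, Finset.mem_range, Finset.mem_inter]
                  constructor
                  · rintro ⟨hx1, hx2⟩
                    by_cases hxA : x ∈ A
                    · rw [hdep'A _ hxA] at hx2
                      exact ⟨⟨by omega, hx2⟩, hxA⟩
                    · rw [hdep'nA _ hxA] at hx2
                      have := Finset.mem_singleton.mp hx2
                      exact absurd (this ▸ hiA) hxA
                  · rintro ⟨⟨hx1, hx2⟩, hxA⟩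
                    refine ⟨Finset.mem_range.mp (hAsub hxA), ?_⟩
                    rw [hdep'A _ hxA]
                    exact hx2
                have herase : (σ t).2.erase (I t) = (S t).2.erase (I t) ∩ A := by
                  rw [ih1]
                  ext x
                  simp only [Finset.mem_erase, Finset.mem_inter]
                  tauto
                rw [herase, hfilter]
                by_cases hW : I t ∈ W
                · rw [if_pos (show I t ∈ W' from Or.inl hW), if_pos hW]
                  ext x
                  simp only [Finset.mem_union, Finset.mem_inter, Finset.mem_singleton]
                  have hxA : x = I t → x ∈ A := fun he => he ▸ hiA
                  tauto
                · rw [if_neg (show I t ∉ W' from fun h => h.elim hW (fun h2 => h2 hiA)),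
                    if_neg hW]
                  ext x
                  simp only [Finset.mem_union, Finset.mem_inter, Finset.notMem_empty,
                    or_false]
                  tauto
              · intro j hj
                dsimp only
                by_cases hji : j = I t
                · subst hji
                  rw [Function.update_self, Function.update_self]
                · rw [Function.update_of_ne hji, Function.update_of_ne hji]
                  exact ih2 j hj
          · have haA1 : aA (t+1) = aA t := by rw [haA_succ t, if_neg hiA]
            have hσeq : σ (t+1) = σ t := by
              show step'^[aA (t+1)] _ = _
              rw [haA1]
            have hIne : ∀ j, (j ∈ A ∨ N+1 ≤ j) → I t ≠ j := by
              intro j hj he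
              rcases hj with hj | hj
              · exact hiA (he ▸ hj)
              · have := hIlt t
                omega
            constructor
            · rw [hσeq, ih1, hSsucc t, hstep, swStepW_eq _ _ _ _ (S t) (hne t), hminbig t]
              by_cases hchg : nv (combine w nar) f W (S t).1 (I t) = (S t).1 (I t)
              · rw [if_pos hchg]
                show (S t).2 ∩ A = (S t).2.erase (I t) ∩ A
                ext x
                simp only [Finset.mem_inter, Finset.mem_erase]
                constructor
                · rintro ⟨h1, h2⟩
                  exact ⟨⟨fun he => hiA (he ▸ h2), h1⟩, h2⟩
                · rintro ⟨⟨_, h1⟩, h2⟩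
                  exact ⟨h1, h2⟩
              · rw [if_neg hchg]
                show (S t).2 ∩ A = ((S t).2.erase (I t)
                    ∪ (Finset.range (N+1)).filter (fun j => I t ∈ dep j)
                    ∪ (if I t ∈ W then {I t} else ∅)) ∩ A
                ext x
                simp only [Finset.mem_inter, Finset.mem_union, Finset.mem_erase,
                  Finset.mem_filter, Finset.mem_range]
                constructor
                · rintro ⟨h1, h2⟩
                  exact ⟨Or.inl (Or.inl ⟨fun he => hiA (he ▸ h2), h1⟩), h2⟩
                · rintro ⟨h1, h2⟩
                  refine ⟨?_, h2⟩
                  rcases h1 with (⟨_, h1⟩ | ⟨h1, h3⟩) | h1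
                  · exact h1
                  · exact absurd (hclos (I t) x h2 h3 (hIlt t)) hiA
                  · exfalso
                    split at h1
                    · exact hiA ((Finset.mem_singleton.mp h1) ▸ h2)
                    · exact Finset.notMem_empty x h1
            · intro j hj
              rw [hσeq, hval t j (hIne j hj)]
              exact ih2 j hj
      -- only finitely many A-processings
      have hstay : ∀ r, (step'^[K + r] (ρ0, Q ∩ A)).2 = ∅ := by
        intro r
        induction r with
        | zero => exact hK2
        | succ r ih =>
          rw [show K + (r+1) = (K+r)+1 from rfl, Function.iterate_succ_apply']
          rw [hstep'def] at ih ⊢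
          rw [swStepW_empty _ _ _ _ _ ih]
          exact ih
      have hAfin : ∃ T2, ∀ t, T2 ≤ t → I t ∉ A := by
        by_contra hcon
        push_neg at hcon
        have hunb : ∀ B, ∃ t, I t ∈ A ∧ B ≤ aA t := by
          intro B
          induction B with
          | zero =>
            obtain ⟨t, _, h⟩ := hcon 0
            exact ⟨t, h, Nat.zero_le _⟩
          | succ B ihB =>
            obtain ⟨t, htA, htB⟩ := ihB
            obtain ⟨t', ht'ge, ht'A⟩ := hcon (t+1)
            refine ⟨t', ht'A, ?_⟩
            have h1 : aA (t+1) = aA t + 1 := by rw [haA_succ t, if_pos htA]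
            have h2 : aA (t+1) ≤ aA t' := Finset.card_le_card
              (Finset.filter_subset_filter _ (Finset.range_subset_range.mpr ht'ge))
            omega
        obtain ⟨t, htA, htK⟩ := hunb K
        have h1 := (hRel t).1
        have h2 : (σ t).2 = ∅ := by
          show (step'^[aA t] (ρ0, Q ∩ A)).2 = ∅
          have := hstay (aA t - K)
          rwa [show K + (aA t - K) = aA t by omega] at this
        have h3 : I t ∈ (σ t).2 := by
          rw [h1]
          exact Finset.mem_inter.mpr ⟨hImem t, htA⟩
        rw [h2] at h3
        exact Finset.notMem_empty _ h3
      obtain ⟨T2, hT2⟩ := hAfin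
      -- thereafter the value of f N is frozen
      have hbstep : ∀ t, T2 ≤ t → f N (S (t+1)).1 = f N (S t).1 := by
        intro t ht
        apply hdep
        intro j hj
        apply hval t
        intro he
        exact hT2 t ht (he ▸ hdepN j hj (he ▸ hIlt t))
      have hbconst : ∀ t r, T2 ≤ t → f N (S (t + r)).1 = f N (S t).1 := by
        intro t r ht
        induction r with
        | zero => rfl
        | succ r ih =>
          rw [show t + (r+1) = (t+r)+1 from rfl, hbstep (t+r) (by omega), ih]
      obtain ⟨u1, hu1ge, hu1top⟩ := htopinf T2
      have hnext' : ∃ t, u1 < t ∧ I t = N := by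
        obtain ⟨t, h1, h2⟩ := htopinf (u1+1)
        exact ⟨t, by omega, h2⟩
      have hspec := Nat.find_spec hnext'
      obtain ⟨hu2gt, hu2top⟩ := hspec
      have hu2min : ∀ t, u1 < t → t < Nat.find hnext' → I t ≠ N :=
        fun t h1 h2 h => (Nat.find_min hnext' h2) ⟨h1, h⟩
      have hupd1 : (S (u1+1)).1 N = f N (S u1).1 := by
        rw [hupdtop u1 hu1top]
        unfold nv
        rw [if_neg hNW]
      have hconst2 : ∀ m, u1 + 1 + m ≤ Nat.find hnext' →
          (S (u1 + 1 + m)).1 N = (S (u1+1)).1 N := by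
        intro m
        induction m with
        | zero => intro _; rfl
        | succ m ih =>
          intro hle
          rw [show u1 + 1 + (m+1) = (u1 + 1 + m) + 1 from rfl]
          rw [hval _ N (hu2min _ (by omega) (by omega))]
          exact ih (by omega)
      have hvalu2 : (S (Nat.find hnext')).1 N = f N (S u1).1 := by
        have h2 := hconst2 (Nat.find hnext' - (u1+1)) (by omega)
        rw [show u1 + 1 + (Nat.find hnext' - (u1+1)) = Nat.find hnext' by omega] at h2
        rw [h2, hupd1]
      apply htopchg (Nat.find hnext') hu2top
      unfold nv
      rw [if_neg hNW, hvalu2]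
      have h3 := hbconst u1 (Nat.find hnext' - u1) hu1ge
      rwa [show u1 + (Nat.find hnext' - u1) = Nat.find hnext' by omega] at h3

end Main

open Classical in
theorem stmt11 {D : Type*} [PartialOrder D]
    (hdir : ∀ a b : D, ∃ c, a ≤ c ∧ b ≤ c)
    (w nar : D → D → D)
    (hw1 : ∀ a b, a ≤ w a b) (hw2 : ∀ a b, b ≤ w a b)
    (hn : ∀ a b, b ≤ a → b ≤ nar a b ∧ nar a b ≤ a)
    (hwterm : ∀ d b : ℕ → D, (∀ i, d (i+1) = w (d i) (b i)) →
      ∃ N, ∀ m, N ≤ m → d m = d N)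
    (hnterm : ∀ d b : ℕ → D, (∀ i, b i ≤ d i ∧ d (i+1) = nar (d i) (b i)) →
      ∃ N, ∀ m, N ≤ m → d m = d N)
    (n : ℕ) (f : ℕ → (ℕ → D) → D) (hmono : ∀ i, Monotone (f i))
    (dep : ℕ → Finset ℕ)
    (hdep : ∀ i (ρ ρ' : ℕ → D), (∀ j ∈ dep i, ρ j = ρ' j) → f i ρ = f i ρ')
    (W : Set ℕ)
    -- admissibility: on every cycle of the dependency graph (edge x_j → x_i
    -- iff x_j ∈ dep_i), the unknown with the highest index belongs to W
    (hadm : ∀ (c : ℕ → ℕ) (p : ℕ), 0 < p → (∀ k, c (k + p) = c k) →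
      (∀ k, c k ∈ dep (c (k+1))) → (∀ k, c k < n) →
      ∃ k, c k ∈ W ∧ ∀ j, c j ≤ c k)
    (ρ0 : ℕ → D) :
    ∃ k : ℕ,
      ((swStepW (combine w nar) f
          (fun i => (Finset.range n).filter (fun j => i ∈ dep j)) W)^[k]
          (ρ0, Finset.range n)).2 = ∅ := by
  exact sw_main w nar hw2 hn hwterm hnterm n f dep W hmono hdep hadm ρ0
    (Finset.range n) (subset_refl _)
    (fun j hj hjQ => absurd (Finset.mem_range.mpr hj) hjQ)
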